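/- Let x, y be letters of the type-A crystal B_1^{A} = {1 < 2 < … < n}, and define the local coenergy H̄^A(x ⊗ y) = 0 if x ≥ y and 1 if x < y. For a word b = x_1 ⊗ … ⊗ x_m ∈ (B_1^A)^{⊗m}, let D̄^A(b) = Σ_{i=1}^{m−1} (m−i) H̄^A(x_i ⊗ x_{i+1}). Then D̄^A is constant on the connected components of the A_{n−1}-crystal (B_1^A)^{⊗m}, i.e., D̄^A(ẽ_i(b)) = D̄^A(b) whenever ẽ_i(b) ≠ 0, for all 1 ≤ i ≤ n−1. -/
import Mathlib


/-- `ε_i` on letters of the type `A_{n-1}` vector crystal `B_1^A = {1 < ⋯ < n}`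
(colors `i = c+1` for `c : Fin (n-1)`): `ε_i(i+1) = 1`, else `0`. -/
def epsLA (n : ℕ) (c : Fin (n - 1)) (x : Fin n) : ℕ :=
  if (x : ℕ) = (c : ℕ) + 1 then 1 else 0

/-- `φ_i` on letters: `φ_i(i) = 1`, else `0`. -/
def phiLA (n : ℕ) (c : Fin (n - 1)) (x : Fin n) : ℕ :=
  if (x : ℕ) = (c : ℕ) then 1 else 0

/-- The raising operator `ẽ_i` on letters: `i+1 ↦ i`, else `0`. -/
def eLA (n : ℕ) (c : Fin (n - 1)) (x : Fin n) : Option (Fin n) :=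
  if (x : ℕ) = (c : ℕ) + 1 then
    some ⟨(c : ℕ), lt_of_lt_of_le c.isLt (Nat.sub_le n 1)⟩ else none

/-- `ε_i` of a word (tensor product of letters, leftmost factor first). -/
def epsWA (n : ℕ) (c : Fin (n - 1)) : List (Fin n) → ℕ
  | [] => 0
  | x :: w => epsLA n c x + (epsWA n c w - phiLA n c x)

/-- The raising operator `ẽ_i` on words by the tensor rule:
`ẽ_i(b ⊗ w) = ẽ_i(b) ⊗ w` if `φ_i(b) ≥ ε_i(w)`, and `b ⊗ ẽ_i(w)` otherwise. -/
def eWA (n : ℕ) (c : Fin (n - 1)) : List (Fin n) → Option (List (Fin n))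
  | [] => none
  | x :: w =>
    if epsWA n c w ≤ phiLA n c x then (eLA n c x).map (· :: w)
    else (eWA n c w).map (x :: ·)

/-- The local coenergy `H̄^A(x ⊗ y)`: `0` if `x ≥ y`, `1` if `x < y`. -/
def HA (n : ℕ) (x y : Fin n) : ℕ := if x < y then 1 else 0

/-- `D̄^A(x_1 ⊗ ⋯ ⊗ x_m) = Σ_{i=1}^{m-1} (m-i) H̄^A(x_i ⊗ x_{i+1})`. -/
def DA (n : ℕ) : List (Fin n) → ℕ
  | [] => 0
  | [_] => 0
  | x :: y :: w => (w.length + 1) * HA n x y + DA n (y :: w)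


lemma eLA_eq_some (n : ℕ) (c : Fin (n - 1)) (x a : Fin n)
    (h : eLA n c x = some a) : (x : ℕ) = (c : ℕ) + 1 ∧ (a : ℕ) = (c : ℕ) := by
  unfold eLA at h
  split at h
  · exact ⟨by assumption, by simpa using (Option.some_inj.1 h).symm ▸ rfl⟩
  · exact absurd h (by simp)

lemma eWA_length (n : ℕ) (c : Fin (n - 1)) :
    ∀ l l' : List (Fin n), eWA n c l = some l' → l'.length = l.length := by
  intro l
  induction l with
  | nil => intro l' h; simp [eWA] at h
  | cons x w ih =>
    intro l' h
    rw [eWA] at h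
    split at h
    · rcases Option.map_eq_some_iff.1 h with ⟨a, _, rfl⟩
      simp
    · rcases Option.map_eq_some_iff.1 h with ⟨w', hw', rfl⟩
      simp [ih w' hw']

/-- the coenergy `D̄^A` is constant on connected components of the
`A_{n-1}`-crystal `(B_1^A)^{⊗ m}`: it is unchanged by every raising operator `ẽ_i`. -/
theorem DA_invariant_under_e (n : ℕ) (c : Fin (n - 1))
    (l l' : List (Fin n)) (h : eWA n c l = some l') :
    DA n l = DA n l' := by
  induction l generalizing l' with
  | nil => simp [eWA] at h
  | cons x w ih =>
    rw [eWA] at h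
    by_cases hle : epsWA n c w ≤ phiLA n c x
    · rw [if_pos hle] at h
      -- head letter is changed: x = c+1 ↦ a = c
      rcases Option.map_eq_some_iff.1 h with ⟨a, ha, rfl⟩
      obtain ⟨hx, hav⟩ := eLA_eq_some n c x a ha
      -- phi x = 0 since x = c+1 ≠ c, so epsWA w = 0
      have hphix : phiLA n c x = 0 := by simp [phiLA, hx]
      have hwz : epsWA n c w = 0 := by omega
      cases w with
      | nil => simp [DA]
      | cons y v =>
        have hy : epsLA n c y = 0 := by
          have := hwz
          rw [epsWA] at this
          omega
        have hyne : (y : ℕ) ≠ (c : ℕ) + 1 := by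
          intro hcon; simp [epsLA, hcon] at hy
        have hH : HA n x y = HA n a y := by
          simp only [HA, Fin.lt_def, hx, hav]
          rcases Nat.lt_or_ge (c : ℕ) (y : ℕ) with h1 | h1 <;>
            [skip; simp [Nat.not_lt.2 h1, Nat.not_lt.2 (le_trans h1 (Nat.le_succ _))]]
          have : (c : ℕ) + 1 < (y : ℕ) := by omega
          simp [this, h1]
        simp [DA, hH]
    · rw [if_neg hle] at h
      rcases Option.map_eq_some_iff.1 h with ⟨w', hw', rfl⟩
      have hDt : DA n w = DA n w' := ih w' hw'
      have hlen : w'.length = w.length := eWA_length n c w w' hw'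
      cases w with
      | nil => simp [eWA] at hw'
      | cons y v =>
        rw [eWA] at hw'
        by_cases hle2 : epsWA n c v ≤ phiLA n c y
        · rw [if_pos hle2] at hw' 
          rcases Option.map_eq_some_iff.1 hw' with ⟨a, ha, rfl⟩
          obtain ⟨hy, hav⟩ := eLA_eq_some n c y a ha
          have hphiy : phiLA n c y = 0 := by simp [phiLA, hy]
          have hvz : epsWA n c v = 0 := by omega
          have heps : epsWA n c (y :: v) = 1 := by
            rw [epsWA]; simp [epsLA, hy, hvz, hphiy]
          have hphix : phiLA n c x = 0 := by omega
          have hxne : (x : ℕ) ≠ (c : ℕ) := by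
            intro hcon; simp [phiLA, hcon] at hphix
          have hH : HA n x y = HA n x a := by
            simp only [HA, Fin.lt_def, hy, hav]
            rcases Nat.lt_or_ge (x : ℕ) (c : ℕ) with h1 | h1
            · simp [h1, Nat.lt_succ_of_lt h1]
            · have h2 : ¬ (x : ℕ) < (c : ℕ) := Nat.not_lt.2 h1
              have h3 : ¬ (x : ℕ) < (c : ℕ) + 1 := by omega
              simp [h2, h3]
          simp only [DA, hH]
          rw [show DA n (y :: v) = DA n (a :: v) from hDt]
        · rw [if_neg hle2] at hw'
          rcases Option.map_eq_some_iff.1 hw' with ⟨v', hv', rfl⟩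
          have hlv : v'.length = v.length := eWA_length n c v v' hv'
          simp only [DA, hlv]
          rw [show DA n (y :: v) = DA n (y :: v') from hDt]
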